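/- Let X be a real or complex Banach space, T an invertible bounded linear operator on X, and M, N closed subspaces with X = M ⊕ N (topological direct sum), T(M) ⊆ M and T⁻¹(N) ⊆ N; assume there are constants a ≥ 1 and t ∈ (0,1) such that ‖Tⁿ(y)‖ ≤ a tⁿ ‖y‖ and ‖T⁻ⁿ(z)‖ ≤ a tⁿ ‖z‖ for all integers n ≥ 0, y ∈ M, z ∈ N. Then there exists ε > 0 such that for every p ∈ ℕ and all bounded Lipschitz maps L₀,…,L_{p−1} : X → X with Lip(L_j) < ε for all j, there exist continuous bounded maps v₀,…,v_{p−1} : X → X such that, setting k_j : x ↦ x + v_j(x), one has k_{j+1} ∘ (T + L_j) = T ∘ k_j for all j (indices mod p). -/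

import Mathlib

noncomputable section

/-- The sup-norm of the map `F` is finite, i.e. `F` is a bounded map. -/
def BoundedMap {X Y : Type*} [Norm Y] (F : X → Y) : Prop :=
  ∃ C, ∀ x, ‖F x‖ ≤ C

/-- `Lip(F) < ε`: `F` is Lipschitz with some constant `< ε`. -/
def LipLt {X Y : Type*} [PseudoEMetricSpace X] [PseudoEMetricSpace Y]
    (F : X → Y) (ε : ℝ) : Prop :=
  ∃ c : NNReal, (c : ℝ) < ε ∧ LipschitzWith c F

open BoundedContinuousFunction in
theorem key_semiconj
    {𝕜 X : Type*} [RCLike 𝕜] [NormedAddCommGroup X] [NormedSpace 𝕜 X] [CompleteSpace X]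
    (T : X ≃L[𝕜] X) (P Q : X →L[𝕜] X)
    (hPQ : ∀ x, P x + Q x = x)
    (hPP : ∀ x, P (P x) = P x) (hPQ0 : ∀ x, P (Q x) = 0)
    (hQQ : ∀ x, Q (Q x) = Q x) (hQP0 : ∀ x, Q (P x) = 0)
    (hTP : ∀ x, P (T (P x)) = T (P x)) (hTsQ : ∀ x, Q (T.symm (Q x)) = T.symm (Q x))
    (a t : ℝ) (ha : 0 ≤ a) (ht0 : 0 < t) (ht1 : t < 1)
    (hPb : ∀ (n : ℕ) (x : X), ‖(⇑T)^[n] (P x)‖ ≤ a * t ^ n * ‖P x‖)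
    (hQb : ∀ (n : ℕ) (x : X), ‖(⇑T.symm)^[n] (Q x)‖ ≤ a * t ^ n * ‖Q x‖)
    (p : ℕ) (L : Fin (p + 1) → X → X)
    (C : Fin (p + 1) → ℝ) (hC : ∀ j x, ‖L j x‖ ≤ C j)
    (hLc : ∀ j, Continuous (L j))
    (G : Fin (p + 1) → X → X) (hGc : ∀ j, Continuous (G j))
    (hGF : ∀ j x, G j (T x + L j x) = x) :
    ∃ v : Fin (p + 1) → X →ᵇ X,
      ∀ j x, (T x + L j x) + v (j + 1) (T x + L j x) = T (x + v j x) := by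
  obtain ⟨Φ, hΦ⟩ : ∃ Φ : (Fin (p+1) → X →ᵇ X) → (Fin (p+1) → X →ᵇ X),
      ∀ v j x, Φ v j x =
        T (P (v (j-1) (G (j-1) x))) - P (L (j-1) (G (j-1) x))
          + T.symm (Q (v (j+1) (T x + L j x))) + T.symm (Q (L j x)) := by
    refine ⟨fun v j =>
      BoundedContinuousFunction.comp _ (T : X →L[𝕜] X).lipschitz
        (BoundedContinuousFunction.comp _ P.lipschitz
          ((v (j-1)).compContinuous ⟨G (j-1), hGc (j-1)⟩))
      - BoundedContinuousFunction.comp _ P.lipschitz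
          (BoundedContinuousFunction.ofNormedAddCommGroup (fun x => L (j-1) (G (j-1) x))
            ((hLc (j-1)).comp (hGc (j-1))) (C (j-1)) (fun x => hC (j-1) _))
      + BoundedContinuousFunction.comp _ (T.symm : X →L[𝕜] X).lipschitz
        (BoundedContinuousFunction.comp _ Q.lipschitz
          ((v (j+1)).compContinuous ⟨fun x => T x + L j x, (T.continuous.add (hLc j))⟩))
      + BoundedContinuousFunction.comp _ (T.symm : X →L[𝕜] X).lipschitz
        (BoundedContinuousFunction.comp _ Q.lipschitz
          (BoundedContinuousFunction.ofNormedAddCommGroup (L j) (hLc j) (C j) (hC j))),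
      fun v j x => rfl⟩
  have hPTsQ : ∀ u, P (T.symm (Q u)) = 0 := fun u => by rw [← hTsQ u]; exact hPQ0 _
  have hQTP : ∀ u, Q (T (P u)) = 0 := fun u => by rw [← hTP u]; exact hQP0 _
  have hstep : ∀ v w (j : Fin (p+1)) (x : X),
      Φ v j x - Φ w j x
        = T (P (v (j-1) (G (j-1) x) - w (j-1) (G (j-1) x)))
          + T.symm (Q (v (j+1) (T x + L j x) - w (j+1) (T x + L j x))) := by
    intro v w j x
    rw [hΦ v j x, hΦ w j x, map_sub P, map_sub Q, map_sub T, map_sub T.symm]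
    abel
  have hPstep : ∀ v w (j : Fin (p+1)) (x : X),
      P (Φ v j x - Φ w j x)
        = T (P (v (j-1) (G (j-1) x) - w (j-1) (G (j-1) x))) := by
    intro v w j x
    rw [hstep v w j x, map_add P, hTP, hPTsQ, add_zero]
  have hQstep : ∀ v w (j : Fin (p+1)) (x : X),
      Q (Φ v j x - Φ w j x)
        = T.symm (Q (v (j+1) (T x + L j x) - w (j+1) (T x + L j x))) := by
    intro v w j x
    rw [hstep v w j x, map_add Q, hQTP, hTsQ, zero_add]
  have claim : ∀ n : ℕ, ∀ v w : Fin (p+1) → X →ᵇ X, ∀ j x, ∃ j₁ y₁ j₂ y₂,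
      P ((Φ^[n] v) j x - (Φ^[n] w) j x) = (⇑T)^[n] (P (v j₁ y₁ - w j₁ y₁)) ∧
      Q ((Φ^[n] v) j x - (Φ^[n] w) j x) = (⇑T.symm)^[n] (Q (v j₂ y₂ - w j₂ y₂)) := by
    intro n
    induction n with
    | zero => intro v w j x; exact ⟨j, x, j, x, rfl, rfl⟩
    | succ n ih =>
      intro v w j x
      obtain ⟨j₁, y₁, j₂, y₂, h₁, h₂⟩ := ih (Φ v) (Φ w) j x
      refine ⟨j₁ - 1, G (j₁ - 1) y₁, j₂ + 1, T y₂ + L j₂ y₂, ?_, ?_⟩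
      · rw [Function.iterate_succ_apply Φ n v, Function.iterate_succ_apply Φ n w, h₁,
          hPstep v w j₁ y₁, Function.iterate_succ_apply]
      · rw [Function.iterate_succ_apply Φ n v, Function.iterate_succ_apply Φ n w, h₂,
          hQstep v w j₂ y₂, Function.iterate_succ_apply]

  have hB : 0 ≤ a * (‖P‖ + ‖Q‖) := mul_nonneg ha (by positivity)
  have claimB : ∀ (n : ℕ) (v w : Fin (p+1) → X →ᵇ X) (j : Fin (p+1)) (x : X),
      ‖(Φ^[n] v) j x - (Φ^[n] w) j x‖ ≤ a * (‖P‖ + ‖Q‖) * t ^ n * dist v w := by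
    intro n v w j x
    obtain ⟨j₁, y₁, j₂, y₂, h₁, h₂⟩ := claim n v w j x
    have hu₁ : ‖v j₁ y₁ - w j₁ y₁‖ ≤ dist v w := by
      rw [← dist_eq_norm]
      exact (BoundedContinuousFunction.dist_coe_le_dist y₁).trans (dist_le_pi_dist v w j₁)
    have hu₂ : ‖v j₂ y₂ - w j₂ y₂‖ ≤ dist v w := by
      rw [← dist_eq_norm]
      exact (BoundedContinuousFunction.dist_coe_le_dist y₂).trans (dist_le_pi_dist v w j₂)
    have hat : 0 ≤ a * t ^ n := mul_nonneg ha (pow_nonneg ht0.le n)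
    calc ‖(Φ^[n] v) j x - (Φ^[n] w) j x‖
        = ‖P ((Φ^[n] v) j x - (Φ^[n] w) j x) + Q ((Φ^[n] v) j x - (Φ^[n] w) j x)‖ := by
          rw [hPQ]
      _ ≤ ‖P ((Φ^[n] v) j x - (Φ^[n] w) j x)‖ + ‖Q ((Φ^[n] v) j x - (Φ^[n] w) j x)‖ :=
          norm_add_le _ _
      _ = ‖(⇑T)^[n] (P (v j₁ y₁ - w j₁ y₁))‖ + ‖(⇑T.symm)^[n] (Q (v j₂ y₂ - w j₂ y₂))‖ := by
          rw [h₁, h₂]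
      _ ≤ a * t ^ n * ‖P (v j₁ y₁ - w j₁ y₁)‖ + a * t ^ n * ‖Q (v j₂ y₂ - w j₂ y₂)‖ :=
          add_le_add (hPb n _) (hQb n _)
      _ ≤ a * t ^ n * (‖P‖ * dist v w) + a * t ^ n * (‖Q‖ * dist v w) := by
          have b₁ : ‖P (v j₁ y₁ - w j₁ y₁)‖ ≤ ‖P‖ * dist v w :=
            (P.le_opNorm _).trans (mul_le_mul_of_nonneg_left hu₁ (norm_nonneg _))
          have b₂ : ‖Q (v j₂ y₂ - w j₂ y₂)‖ ≤ ‖Q‖ * dist v w :=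
            (Q.le_opNorm _).trans (mul_le_mul_of_nonneg_left hu₂ (norm_nonneg _))
          exact add_le_add (mul_le_mul_of_nonneg_left b₁ hat) (mul_le_mul_of_nonneg_left b₂ hat)
      _ = a * (‖P‖ + ‖Q‖) * t ^ n * dist v w := by ring
  obtain ⟨n, hn⟩ : ∃ n : ℕ, t ^ n < (a * (‖P‖ + ‖Q‖) + 1)⁻¹ :=
    exists_pow_lt_of_lt_one (by positivity) ht1
  have hK1 : a * (‖P‖ + ‖Q‖) * t ^ n < 1 := by
    have h1 : a * (‖P‖ + ‖Q‖) * t ^ n ≤ (a * (‖P‖ + ‖Q‖) + 1) * t ^ n :=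
      mul_le_mul_of_nonneg_right (by linarith) (pow_nonneg ht0.le n)
    have h2 : (a * (‖P‖ + ‖Q‖) + 1) * t ^ n < (a * (‖P‖ + ‖Q‖) + 1) * (a * (‖P‖ + ‖Q‖) + 1)⁻¹ :=
      mul_lt_mul_of_pos_left hn (by linarith)
    rw [mul_inv_cancel₀ (by linarith)] at h2
    linarith
  have hKnn : 0 ≤ a * (‖P‖ + ‖Q‖) * t ^ n := mul_nonneg hB (pow_nonneg ht0.le n)
  set K : NNReal := (a * (‖P‖ + ‖Q‖) * t ^ n).toNNReal with hKdef
  have hKc : (K : ℝ) = a * (‖P‖ + ‖Q‖) * t ^ n := Real.coe_toNNReal _ hKnn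
  have hcontr : ContractingWith K (Φ^[n]) := by
    constructor
    · have : (K : ℝ) < 1 := by rw [hKc]; exact hK1
      exact_mod_cast this
    · apply LipschitzWith.of_dist_le_mul
      intro v w
      rw [hKc]
      refine (dist_pi_le_iff (by positivity)).mpr fun j => ?_
      refine (BoundedContinuousFunction.dist_le (by positivity)).mpr fun x => ?_
      rw [dist_eq_norm]
      exact claimB n v w j x
  set z := ContractingWith.fixedPoint (Φ^[n]) hcontr with hzdef
  have hz0 : Function.IsFixedPt (Φ^[n]) z := hcontr.fixedPoint_isFixedPt
  have hz : Φ z = z := by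
    have h1 : Function.IsFixedPt (Φ^[n]) (Φ z) := by
      show Φ^[n] (Φ z) = Φ z
      rw [← Function.iterate_succ_apply, Function.iterate_succ_apply', hz0]
    exact hcontr.fixedPoint_unique' h1 hz0
  have hfix : ∀ (j : Fin (p+1)) (x : X), z j x =
      T (P (z (j-1) (G (j-1) x))) - P (L (j-1) (G (j-1) x))
        + T.symm (Q (z (j+1) (T x + L j x))) + T.symm (Q (L j x)) := by
    intro j x
    conv_lhs => rw [← hz]
    exact hΦ z j x
  have Peq : ∀ (j : Fin (p+1)) (x : X),
      P (z j x) = T (P (z (j-1) (G (j-1) x))) - P (L (j-1) (G (j-1) x)) := by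
    intro j x
    have h := congrArg (⇑P) (hfix j x)
    rw [map_add, map_add, map_sub, hTP, hPP, hPTsQ, hPTsQ, add_zero, add_zero] at h
    exact h
  have Qeq : ∀ (j : Fin (p+1)) (x : X),
      Q (z j x) = T.symm (Q (z (j+1) (T x + L j x))) + T.symm (Q (L j x)) := by
    intro j x
    have h := congrArg (⇑Q) (hfix j x)
    rw [map_add, map_add, map_sub, hQTP, hQP0, hTsQ, hTsQ, sub_zero, zero_add] at h
    exact h
  refine ⟨z, fun j x => ?_⟩
  have h1 := Peq (j+1) (T x + L j x)
  rw [add_sub_cancel_right, hGF j x] at h1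
  have h1' : T (P (z j x)) = P (z (j+1) (T x + L j x)) + P (L j x) := by
    rw [h1]; abel
  have h2 : T (Q (z j x)) = Q (z (j+1) (T x + L j x)) + Q (L j x) := by
    rw [Qeq j x, map_add, ContinuousLinearEquiv.apply_symm_apply,
      ContinuousLinearEquiv.apply_symm_apply]
  calc (T x + L j x) + z (j+1) (T x + L j x)
      = (T x + (P (L j x) + Q (L j x)))
          + (P (z (j+1) (T x + L j x)) + Q (z (j+1) (T x + L j x))) := by
        rw [hPQ (L j x), hPQ (z (j+1) (T x + L j x))]
    _ = T x + ((P (z (j+1) (T x + L j x)) + P (L j x))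
          + (Q (z (j+1) (T x + L j x)) + Q (L j x))) := by abel
    _ = T x + (T (P (z j x)) + T (Q (z j x))) := by rw [← h1', ← h2]
    _ = T x + T (P (z j x) + Q (z j x)) := by rw [map_add]
    _ = T x + T (z j x) := by rw [hPQ (z j x)]
    _ = T (x + z j x) := (map_add T x (z j x)).symm

/-- Existence of the maps `k_j = I + v_j` with `k_{j+1} ∘ (T + L_j) = T ∘ k_j`
(indices mod `p`). -/
theorem semiconjugacy_existence_K
    {𝕜 X : Type*} [RCLike 𝕜] [NormedAddCommGroup X] [NormedSpace 𝕜 X] [CompleteSpace X]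
    (T : X ≃L[𝕜] X) (M N : Submodule 𝕜 X)
    (hMc : IsClosed (M : Set X)) (hNc : IsClosed (N : Set X)) (hcompl : IsCompl M N)
    (hM : ∀ x ∈ M, T x ∈ M) (hN : ∀ x ∈ N, T.symm x ∈ N)
    (a t : ℝ) (ha : 1 ≤ a) (ht : t ∈ Set.Ioo (0 : ℝ) 1)
    (hMbound : ∀ (n : ℕ), ∀ y ∈ M, ‖(⇑T)^[n] y‖ ≤ a * t ^ n * ‖y‖)
    (hNbound : ∀ (n : ℕ), ∀ z ∈ N, ‖(⇑T.symm)^[n] z‖ ≤ a * t ^ n * ‖z‖) :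
    ∃ ε > 0, ∀ (p : ℕ) (L : Fin (p + 1) → X → X),
      (∀ j, BoundedMap (L j)) → (∀ j, LipLt (L j) ε) →
      ∃ v : Fin (p + 1) → X → X,
        (∀ j, Continuous (v j)) ∧ (∀ j, BoundedMap (v j)) ∧
        (∀ j, ∀ x : X, (T x + L j x) + v (j + 1) (T x + L j x) = T (x + v j x)) := by
  classical
  -- continuous projections
  set proj := M.linearProjOfClosedCompl N hcompl hMc hNc with hproj
  set proj' := N.linearProjOfClosedCompl M hcompl.symm hNc hMc with hproj'
  have hcoe : ⇑proj = ⇑(M.linearProjOfIsCompl N hcompl) :=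
    Submodule.coe_continuous_linearProjOfClosedCompl' hcompl hMc hNc
  have hcoe' : ⇑proj' = ⇑(N.linearProjOfIsCompl M hcompl.symm) :=
    Submodule.coe_continuous_linearProjOfClosedCompl' hcompl.symm hNc hMc
  set P : X →L[𝕜] X := M.subtypeL.comp proj with hPdef
  set Q : X →L[𝕜] X := N.subtypeL.comp proj' with hQdef
  have hPmem : ∀ x, P x ∈ M := fun x => (proj x).2
  have hQmem : ∀ x, Q x ∈ N := fun x => (proj' x).2
  have hPid : ∀ x ∈ M, P x = x := by
    intro x hx
    show ((proj x : M) : X) = x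
    rw [show proj x = M.linearProjOfIsCompl N hcompl x from congrFun hcoe x]
    exact congrArg Subtype.val (Submodule.linearProjOfIsCompl_apply_left hcompl ⟨x, hx⟩)
  have hQid : ∀ x ∈ N, Q x = x := by
    intro x hx
    show ((proj' x : N) : X) = x
    rw [show proj' x = N.linearProjOfIsCompl M hcompl.symm x from congrFun hcoe' x]
    exact congrArg Subtype.val
      (Submodule.linearProjOfIsCompl_apply_left hcompl.symm ⟨x, hx⟩)
  have hP0 : ∀ x ∈ N, P x = 0 := by
    intro x hx
    show ((proj x : M) : X) = 0
    rw [show proj x = M.projectionOnto N hcompl x from congrFun hcoe x,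
      Submodule.projectionOnto_apply_of_mem_right hcompl hx, Submodule.coe_zero]
  have hQ0 : ∀ x ∈ M, Q x = 0 := by
    intro x hx
    show ((proj' x : N) : X) = 0
    rw [show proj' x = N.projectionOnto M hcompl.symm x from congrFun hcoe' x,
      Submodule.projectionOnto_apply_of_mem_right hcompl.symm hx, Submodule.coe_zero]
  have hPQsum : ∀ x, P x + Q x = x := by
    intro x
    have h := Submodule.projection_add_projection_eq_self hcompl x
    show ((proj x : M) : X) + ((proj' x : N) : X) = x
    rw [show proj x = M.linearProjOfIsCompl N hcompl x from congrFun hcoe x,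
      show proj' x = N.linearProjOfIsCompl M hcompl.symm x from congrFun hcoe' x]
    exact h
  -- choice of ε
  refine ⟨(‖(T.symm : X →L[𝕜] X)‖ + 1)⁻¹, by positivity, fun p L hLB hLip => ?_⟩
  choose c hcε hlip using hLip
  choose C hC using hLB
  have happrox : ∀ j, ApproximatesLinearOn (fun x => T x + L j x)
      (T : X →L[𝕜] X) Set.univ (c j) := by
    intro j x _ y _
    have he : (T x + L j x) - (T y + L j y) - (T : X →L[𝕜] X) (x - y)
        = L j x - L j y := by
      rw [ContinuousLinearEquiv.coe_coe, map_sub T]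
      abel
    rw [he, ← dist_eq_norm, ← dist_eq_norm]
    exact (hlip j).dist_le_mul x y
  have hcond : ∀ j, Subsingleton X ∨ c j < ‖(T.symm : X →L[𝕜] X)‖₊⁻¹ := by
    intro j
    by_cases hs : Subsingleton X
    · exact Or.inl hs
    · right
      have hX : Nontrivial X := not_subsingleton_iff_nontrivial.mp hs
      obtain ⟨x, hx⟩ := exists_ne (0 : X)
      have hpos : 0 < ‖(T.symm : X →L[𝕜] X)‖ := by
        by_contra h
        push_neg at h
        have h0 : ‖(T.symm : X →L[𝕜] X)‖ = 0 := le_antisymm h (norm_nonneg _)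
        have h2 : (T.symm : X →L[𝕜] X) = 0 := by
          rwa [ContinuousLinearMap.opNorm_zero_iff] at h0
        apply hx
        have h3 : (T.symm : X →L[𝕜] X) (T x) = 0 := by rw [h2]; rfl
        have h4 : T.symm (T x) = x := T.symm_apply_apply x
        rw [← h4]; exact h3
      have hlt : (c j : ℝ) < (‖(T.symm : X →L[𝕜] X)‖₊⁻¹ : NNReal) := by
        rw [NNReal.coe_inv, coe_nnnorm]
        have h1 : (c j : ℝ) < (‖(T.symm : X →L[𝕜] X)‖ + 1)⁻¹ := hcε j
        have h2 : (‖(T.symm : X →L[𝕜] X)‖ + 1)⁻¹ ≤ ‖(T.symm : X →L[𝕜] X)‖⁻¹ :=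
          inv_anti₀ hpos (by linarith)
        linarith
      exact_mod_cast hlt
  set e : Fin (p+1) → (X ≃ₜ X) := fun j =>
    ApproximatesLinearOn.toHomeomorph _ (happrox j) (hcond j) with hedef
  have hGF : ∀ j (x : X), (e j).symm (T x + L j x) = x := fun j x =>
    (e j).symm_apply_apply x
  obtain ⟨v, hv⟩ := key_semiconj T P Q hPQsum
    (fun x => hPid _ (hPmem x)) (fun x => hP0 _ (hQmem x))
    (fun x => hQid _ (hQmem x)) (fun x => hQ0 _ (hPmem x))
    (fun x => hPid _ (hM _ (hPmem x))) (fun x => hQid _ (hN _ (hQmem x)))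
    a t (le_trans zero_le_one ha) ht.1 ht.2
    (fun n x => hMbound n _ (hPmem x)) (fun n x => hNbound n _ (hQmem x))
    p L C hC (fun j => (hlip j).continuous)
    (fun j => ⇑(e j).symm) (fun j => (e j).symm.continuous) hGF
  exact ⟨fun j => ⇑(v j), fun j => (v j).continuous,
    fun j => ⟨‖v j‖, fun x => (v j).norm_coe_le_norm x⟩, hv⟩
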